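/- In any rooted tree T, the restoration value is strictly decreasing along edges away from the root: if u is the parent of w in T, then R_T(w) < R_T(u). Consequently the root has the strictly largest restoration value, and hence the largest winning probability in Pass the Buck. -/

import Mathlib

/-- A rooted tree: a root with a finite list of subtrees. -/
inductive RTree where
  | node : List RTree → RTree

/-- Restoration number and period of a rooted tree, by mutual recursion:
`RP (leaf) = (1, 2)`; for a root with subtrees `ts`,
`R = lcm of the periods of the subtrees` and
`P = (m+2)·R − Σᵢ (R / P(Tᵢ))·R(Tᵢ)`. -/
def RTree.RP : RTree → ℕ × ℕ
  | .node [] => (1, 2)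
  | .node ts@(_ :: _) =>
      let rps := ts.attach.map (fun t => RTree.RP t.1)
      let r := (rps.map Prod.snd).foldr Nat.lcm 1
      (r, (ts.length + 2) * r - (rps.map (fun q => r / q.2 * q.1)).sum)
  decreasing_by
    cases t with
    | mk t ht =>
      have := List.sizeOf_lt_of_mem ht
      simp_all; omega

/-- Restoration number of a rooted tree. -/
def RTree.R (t : RTree) : ℕ := t.RP.1

/-- Period of a rooted tree. -/
def RTree.P (t : RTree) : ℕ := t.RP.2

lemma dvd_foldr_lcm {a : ℕ} {l : List ℕ} (h : a ∈ l) : a ∣ l.foldr Nat.lcm 1 := by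
  induction l with
  | nil => simp at h
  | cons b l ih =>
    rw [List.mem_cons] at h
    rcases h with rfl | h
    · exact Nat.dvd_lcm_left _ _
    · exact (ih h).trans (Nat.dvd_lcm_right _ _)

lemma foldr_lcm_pos {l : List ℕ} (h : ∀ a ∈ l, 0 < a) : 0 < l.foldr Nat.lcm 1 := by
  induction l with
  | nil => simp
  | cons b l ih =>
    exact Nat.lcm_pos (h b (by simp)) (ih fun a ha => h a (by simp [ha]))

lemma RTree.R_node {ts : List RTree} (h : ts ≠ []) :
    (RTree.node ts).R = (ts.map RTree.P).foldr Nat.lcm 1 := by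
  match ts with
  | t :: ts =>
    simp only [RTree.R, RTree.RP]
    have h2 : Prod.snd ∘ RTree.RP = RTree.P := rfl
    simp [List.map_map, h2, RTree.P]

lemma RTree.P_node {ts : List RTree} (h : ts ≠ []) :
    (RTree.node ts).P = (ts.length + 2) * (RTree.node ts).R
      - (ts.map (fun t => (RTree.node ts).R / t.P * t.R)).sum := by
  match ts with
  | t :: ts =>
    rw [RTree.R_node h]
    simp only [RTree.P, RTree.RP]
    have h2 : Prod.snd ∘ RTree.RP = RTree.P := rfl
    have h3 : ∀ r : ℕ, ((fun q : ℕ × ℕ => r / q.2 * q.1) ∘ RTree.RP)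
        = fun t : RTree => r / t.P * t.R := fun r => rfl
    simp [List.map_map, h2, h3, RTree.P, RTree.R]

lemma RTree.key : ∀ t : RTree, 1 ≤ t.R ∧ t.R < t.P := by
  have main : ∀ n (t : RTree), sizeOf t ≤ n → 1 ≤ t.R ∧ t.R < t.P := by
    intro n
    induction n with
    | zero => intro t h; cases t; simp at h
    | succ n ih =>
      rintro ⟨ts⟩ h
      rcases eq_or_ne ts [] with rfl | hne
      · simp [RTree.R, RTree.P, RTree.RP]
      · have hsub : ∀ t' ∈ ts, 1 ≤ t'.R ∧ t'.R < t'.P := by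
          intro t' ht'
          apply ih
          have := List.sizeOf_lt_of_mem ht'
          simp at h; omega
        set r := (ts.map RTree.P).foldr Nat.lcm 1 with hr
        have hrpos : 0 < r := by
          apply foldr_lcm_pos
          intro a ha
          rw [List.mem_map] at ha
          obtain ⟨t', ht', rfl⟩ := ha
          have := hsub t' ht'; omega
        have hterm : ∀ x ∈ ts.map (fun t => r / t.P * t.R), x ≤ r - 1 := by
          intro x hx
          rw [List.mem_map] at hx
          obtain ⟨t', ht', rfl⟩ := hx
          have hd : t'.P ∣ r := dvd_foldr_lcm (List.mem_map_of_mem (f := RTree.P) ht')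
          obtain ⟨c, hc⟩ := hd
          have hc1 : 1 ≤ c := Nat.pos_of_ne_zero (by rintro rfl; rw [hc] at hrpos; simp at hrpos)
          have hPpos : 0 < t'.P := by have := hsub t' ht'; omega
          have hdiv : r / t'.P = c := by rw [hc, Nat.mul_div_cancel_left _ hPpos]
          rw [hdiv]
          calc c * t'.R ≤ c * (t'.P - 1) := Nat.mul_le_mul_left c (by have := (hsub t' ht').2; omega)
            _ = c * t'.P - c := by rw [Nat.mul_sub_one]
            _ = r - c := by rw [hc, Nat.mul_comm]
            _ ≤ r - 1 := by omega
        have hsum : (ts.map (fun t => r / t.P * t.R)).sum ≤ ts.length * (r - 1) := by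
          have := List.sum_le_card_nsmul _ (r - 1) hterm
          simpa using this
        have hR : (RTree.node ts).R = r := RTree.R_node hne
        have hP := RTree.P_node hne
        rw [hR] at hP ⊢
        rw [hP]
        set s := (ts.map (fun t => r / t.P * t.R)).sum
        set m := ts.length
        have e1 : (m + 2) * r = m * r + 2 * r := by ring
        have e2 : m * (r - 1) + m = m * r := by
          have h1 : m * (r - 1) = m * r - m := by rw [Nat.mul_sub_one]
          have : m ≤ m * r := Nat.le_mul_of_pos_right m hrpos
          omega
        constructor
        · omega
        · omega
  intro t; exact main (sizeOf t) t le_rfl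

/-- Vertices are addressed by paths from the root (lists of child indices).
`restAt T w` is the restoration value `R_T(w)` of the vertex `w` in `T`:
`R_T(root) = R(T)` and for `w` in the `k`-th subtree `T_k`,
`R_T(k :: w) = (R(T)/P(T_k)) · R_{T_k}(w)`. (Value `0` for invalid addresses.) -/
def RTree.restAt : RTree → List ℕ → ℕ
  | t, [] => t.R
  | .node ts, k :: rest =>
      match h : ts[k]? with
      | some tk => (RTree.node ts).R / tk.P * tk.restAt rest
      | none => 0
  decreasing_by
    simp only [List.getElem?_eq_some_iff] at h
    obtain ⟨hk, rfl⟩ := h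
    simpa using Nat.lt_succ_of_le (List.sizeOf_le_of_mem (List.getElem_mem hk))

/-- `isVertex T w`: the address `w` denotes an actual vertex of `T`. -/
def RTree.isVertex : RTree → List ℕ → Prop
  | _, [] => True
  | .node ts, k :: rest =>
      match h : ts[k]? with
      | some tk => tk.isVertex rest
      | none => False
  decreasing_by
    simp only [List.getElem?_eq_some_iff] at h
    obtain ⟨hk, rfl⟩ := h
    simpa using Nat.lt_succ_of_le (List.sizeOf_le_of_mem (List.getElem_mem hk))

lemma RTree.restAt_cons {ts : List RTree} {k : ℕ} {tk : RTree} (h : ts[k]? = some tk)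
    (rest : List ℕ) :
    (RTree.node ts).restAt (k :: rest) = (RTree.node ts).R / tk.P * tk.restAt rest := by
  rw [RTree.restAt]
  split
  · next tk' h' => rw [h] at h'; cases h'; rfl
  · next h' => rw [h] at h'; cases h'

lemma RTree.isVertex_cons {ts : List RTree} {k : ℕ} {tk : RTree} (h : ts[k]? = some tk)
    (rest : List ℕ) :
    (RTree.node ts).isVertex (k :: rest) ↔ tk.isVertex rest := by
  rw [RTree.isVertex]
  split
  · next tk' h' => rw [h] at h'; cases h'; rfl
  · next h' => rw [h] at h'; cases h'

lemma RTree.isVertex_cons_none {ts : List RTree} {k : ℕ} (h : ts[k]? = none)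
    (rest : List ℕ) : ¬ (RTree.node ts).isVertex (k :: rest) := by
  rw [RTree.isVertex]
  split
  · next tk' h' => rw [h] at h'; cases h'
  · next h' => exact not_false

lemma RTree.child_dvd {ts : List RTree} {k : ℕ} {tk : RTree} (h : ts[k]? = some tk) :
    tk.P ∣ (RTree.node ts).R := by
  have hm : tk ∈ ts := by
    rw [List.getElem?_eq_some_iff] at h; obtain ⟨hk, rfl⟩ := h; exact List.getElem_mem hk
  have hne : ts ≠ [] := by rintro rfl; simp at hm
  rw [RTree.R_node hne]
  exact dvd_foldr_lcm (List.mem_map_of_mem (f := RTree.P) hm)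

lemma RTree.child_div_pos {ts : List RTree} {k : ℕ} {tk : RTree} (h : ts[k]? = some tk) :
    1 ≤ (RTree.node ts).R / tk.P := by
  have hd := RTree.child_dvd h
  have hPpos : 0 < tk.P := by have := tk.key; omega
  have hRpos : 0 < (RTree.node ts).R := by have := (RTree.node ts).key; omega
  rw [Nat.le_div_iff_mul_le hPpos, one_mul]
  exact Nat.le_of_dvd hRpos hd

lemma RTree.step (u : List ℕ) :
    ∀ (t : RTree) (k : ℕ), t.isVertex (u ++ [k]) → t.restAt (u ++ [k]) < t.restAt u := by
  induction u with
  | nil =>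
    rintro ⟨ts⟩ k hv
    simp only [List.nil_append] at hv ⊢
    rcases hts : ts[k]? with _ | tk
    · exact absurd hv (RTree.isVertex_cons_none hts _)
    · rw [RTree.restAt_cons hts]
      obtain ⟨c, hc⟩ := RTree.child_dvd hts
      have hPpos : 0 < tk.P := by have := tk.key; omega
      have hdiv : (RTree.node ts).R / tk.P = c := by rw [hc, Nat.mul_div_cancel_left _ hPpos]
      have hc1 : 1 ≤ c := by
        have := RTree.child_div_pos hts; rw [hdiv] at this; exact this
      rw [hdiv]
      have h1 : tk.restAt [] = tk.R := by rw [RTree.restAt]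
      have h2 : (RTree.node ts).restAt [] = (RTree.node ts).R := by rw [RTree.restAt]
      rw [h1, h2]
      have hkey := tk.key
      calc c * tk.R ≤ c * (tk.P - 1) := Nat.mul_le_mul_left c (by omega)
        _ = c * tk.P - c := by rw [Nat.mul_sub_one]
        _ = (RTree.node ts).R - c := by rw [hc, Nat.mul_comm]
        _ < (RTree.node ts).R := by
            have : tk.P ≤ (RTree.node ts).R :=
              Nat.le_of_dvd (by have := (RTree.node ts).key; omega) ⟨c, hc⟩
            omega
  | cons j u ih =>
    rintro ⟨ts⟩ k hv
    simp only [List.cons_append] at hv ⊢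
    rcases hts : ts[j]? with _ | tj
    · exact absurd hv (RTree.isVertex_cons_none hts _)
    · rw [RTree.restAt_cons hts, RTree.restAt_cons hts]
      rw [RTree.isVertex_cons hts] at hv
      exact mul_lt_mul_of_pos_left (ih tj k hv) (by have := RTree.child_div_pos hts; omega)

lemma RTree.isVertex_prefix (u : List ℕ) :
    ∀ (t : RTree) (v : List ℕ), t.isVertex (u ++ v) → t.isVertex u := by
  induction u with
  | nil => intro t v _; rw [RTree.isVertex]; trivial
  | cons j u ih =>
    rintro ⟨ts⟩ v hv
    simp only [List.cons_append] at hv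
    rcases hts : ts[j]? with _ | tj
    · exact absurd hv (RTree.isVertex_cons_none hts _)
    · rw [RTree.isVertex_cons hts] at hv
      rw [RTree.isVertex_cons hts]
      exact ih tj v hv

/-- The restoration value strictly decreases along edges away from the root:
if `w` is a child vertex of `u`, then `R_T(w) < R_T(u)`; consequently the root
has the strictly largest restoration value. -/
theorem restoration_strict_decreasing (T : RTree) :
    (∀ (u : List ℕ) (k : ℕ), T.isVertex (u ++ [k]) →
        T.restAt (u ++ [k]) < T.restAt u)
      ∧ ∀ w : List ℕ, w ≠ [] → T.isVertex w → T.restAt w < T.restAt [] := by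
  constructor
  · intro u k hv; exact RTree.step u T k hv
  · intro w
    induction w using List.reverseRecOn with
    | nil => intro h; exact absurd rfl h
    | append_singleton u k ih =>
      intro _ hv
      have h1 := RTree.step u T k hv
      rcases eq_or_ne u [] with rfl | hne
      · simpa using h1
      · have h2 := ih hne (RTree.isVertex_prefix u T [k] hv)
        exact h1.trans h2
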